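/- For every natural number K ≥ 1 and every real D > 0, the series Σ_{t=1}^∞ ((log(D·t²))² · log t)^K / t² converges; moreover, for every K ≥ 1 there exists a real number D ≥ 1 such that D ≥ e·(e/K)^K · Σ_{t=1}^∞ ((log(D·t²))² · log t)^K / t². -/

import Mathlib

open Real Filter Asymptotics

/-- `(1 + log x)^n` is little-o of `x ^ s` for any `s > 0`. -/
lemma aux_one_add_log_pow_isLittleO (n : ℕ) (hn : n ≠ 0) {s : ℝ} (hs : 0 < s) :
    (fun x : ℝ => (1 + Real.log x) ^ n) =o[atTop] fun x : ℝ => x ^ s := by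
  have hr : 0 < s / n := div_pos hs (by positivity)
  have htend : Tendsto (fun x : ℝ => ‖x ^ (s / n)‖) atTop atTop := by
    simpa [Real.norm_eq_abs, Function.comp_def] using tendsto_abs_atTop_atTop.comp (tendsto_rpow_atTop hr)
  have hconst : (fun _ : ℝ => (1 : ℝ)) =o[atTop] fun x : ℝ => x ^ (s / n) :=
    isLittleO_const_left.mpr (Or.inr htend)
  have hlog : (fun x : ℝ => 1 + Real.log x) =o[atTop] fun x : ℝ => x ^ (s / n) :=
    hconst.add (isLittleO_log_rpow_atTop hr)
  have hpow := hlog.pow (Nat.pos_of_ne_zero hn)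
  have heq : (fun x : ℝ => (x ^ (s / n)) ^ n) =ᶠ[atTop] fun x : ℝ => x ^ s := by
    filter_upwards [eventually_ge_atTop (0 : ℝ)] with x hx
    rw [← Real.rpow_natCast (x ^ (s / n)) n, ← Real.rpow_mul hx]
    congr 1
    field_simp
  exact hpow.trans_eventuallyEq heq

/-- Master summability lemma: `((a + b log(t+1))² log(t+1))^K / (t+1)²` is summable. -/
lemma aux_summable (a b : ℝ) (K : ℕ) (hK : K ≠ 0) :
    Summable (fun t : ℕ =>
      ((a + b * Real.log ((t : ℝ) + 1)) ^ 2 * Real.log ((t : ℝ) + 1)) ^ K /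
        ((t : ℝ) + 1) ^ 2) := by
  set num : ℝ → ℝ := fun x => ((a + b * Real.log x) ^ 2 * Real.log x) ^ K with hnumdef
  -- numerator is O of (1 + log x)^(3K)
  have hO : num =O[atTop] fun x : ℝ => (1 + Real.log x) ^ (3 * K) := by
    apply IsBigO.of_bound (((|a| + |b|) ^ 2 + 1) ^ K)
    filter_upwards [eventually_ge_atTop (1 : ℝ)] with x hx
    have hL : 0 ≤ Real.log x := Real.log_nonneg hx
    set L := Real.log x with hLdef
    have h1L : (1 : ℝ) ≤ 1 + L := by linarith
    have habs : |a + b * L| ≤ (|a| + |b|) * (1 + L) := by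
      calc |a + b * L| ≤ |a| + |b * L| := abs_add_le _ _
        _ = |a| + |b| * L := by rw [abs_mul, abs_of_nonneg hL]
        _ ≤ (|a| + |b|) * (1 + L) := by nlinarith [abs_nonneg a, abs_nonneg b]
    have hbase : (a + b * L) ^ 2 * L ≤ ((|a| + |b|) ^ 2 + 1) * (1 + L) ^ 3 := by
      have h2 : (a + b * L) ^ 2 ≤ ((|a| + |b|) * (1 + L)) ^ 2 := by
        rw [← sq_abs (a + b * L)]
        exact pow_le_pow_left₀ (abs_nonneg _) habs 2
      have h3 : (a + b * L) ^ 2 * L ≤ ((|a| + |b|) * (1 + L)) ^ 2 * (1 + L) := by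
        have := mul_le_mul_of_nonneg_right h2 hL
        have h4 : ((|a| + |b|) * (1 + L)) ^ 2 * L ≤ ((|a| + |b|) * (1 + L)) ^ 2 * (1 + L) := by
          apply mul_le_mul_of_nonneg_left (by linarith) (by positivity)
        linarith
      calc (a + b * L) ^ 2 * L ≤ ((|a| + |b|) * (1 + L)) ^ 2 * (1 + L) := h3
        _ = (|a| + |b|) ^ 2 * (1 + L) ^ 3 := by ring
        _ ≤ ((|a| + |b|) ^ 2 + 1) * (1 + L) ^ 3 := by nlinarith [pow_nonneg (by linarith : (0:ℝ) ≤ 1 + L) 3]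
    have hbase0 : 0 ≤ (a + b * L) ^ 2 * L := by positivity
    have hnum_le : ((a + b * L) ^ 2 * L) ^ K ≤ (((|a| + |b|) ^ 2 + 1) * (1 + L) ^ 3) ^ K :=
      pow_le_pow_left₀ hbase0 hbase K
    have hnorm : ‖num x‖ = ((a + b * L) ^ 2 * L) ^ K := by
      rw [hnumdef]
      simp only [Real.norm_eq_abs]
      rw [abs_of_nonneg (pow_nonneg hbase0 K)]
    rw [hnorm, Real.norm_eq_abs, abs_of_nonneg (by positivity : (0:ℝ) ≤ (1 + L) ^ (3 * K))]
    calc ((a + b * L) ^ 2 * L) ^ K ≤ (((|a| + |b|) ^ 2 + 1) * (1 + L) ^ 3) ^ K := hnum_le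
      _ = ((|a| + |b|) ^ 2 + 1) ^ K * (1 + L) ^ (3 * K) := by
          rw [mul_pow, ← pow_mul]
  have hlo : num =o[atTop] fun x : ℝ => x ^ ((1:ℝ)/2) :=
    hO.trans_isLittleO (aux_one_add_log_pow_isLittleO (3 * K) (by positivity) (by norm_num))
  have htend : Tendsto (fun t : ℕ => (t : ℝ) + 1) atTop atTop :=
    tendsto_atTop_add_const_right _ 1 tendsto_natCast_atTop_atTop
  have hcomp : (fun t : ℕ => num ((t : ℝ) + 1)) =o[atTop]
      fun t : ℕ => ((t : ℝ) + 1) ^ ((1:ℝ)/2) := hlo.comp_tendsto htend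
  have hmul : (fun t : ℕ => num ((t : ℝ) + 1) * ((((t : ℝ) + 1) ^ 2)⁻¹)) =O[atTop]
      fun t : ℕ => ((t : ℝ) + 1) ^ ((1:ℝ)/2) * ((((t : ℝ) + 1) ^ 2)⁻¹) :=
    hcomp.isBigO.mul (isBigO_refl _ _)
  have hg_eq : ∀ t : ℕ, ((t : ℝ) + 1) ^ ((1:ℝ)/2) * ((((t : ℝ) + 1) ^ 2)⁻¹)
      = ((t : ℝ) + 1) ^ (-(3/2) : ℝ) := by
    intro t
    have hpos : (0 : ℝ) < (t : ℝ) + 1 := by positivity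
    rw [← Real.rpow_natCast ((t : ℝ) + 1) 2, ← Real.rpow_neg hpos.le,
      ← Real.rpow_add hpos]
    norm_num
  have hgsum : Summable (fun t : ℕ => ((t : ℝ) + 1) ^ (-(3/2) : ℝ)) := by
    have : Summable (fun n : ℕ => (n : ℝ) ^ (-(3/2) : ℝ)) :=
      Real.summable_nat_rpow.mpr (by norm_num)
    have h := (_root_.summable_nat_add_iff 1).mpr this
    exact_mod_cast h
  have hgsum' : Summable (fun t : ℕ =>
      ((t : ℝ) + 1) ^ ((1:ℝ)/2) * ((((t : ℝ) + 1) ^ 2)⁻¹)) := by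
    simpa only [hg_eq] using hgsum
  have := summable_of_isBigO_nat hgsum' hmul
  simpa only [div_eq_mul_inv] using this

/-- For every `K ≥ 1` and `D > 0`, the series
`∑_{t=1}^∞ ((log(D t²))² log t)^K / t²` converges, and there exists `D ≥ 1` satisfying
the self-referential inequality `D ≥ e (e/K)^K ∑_{t=1}^∞ ((log(D t²))² log t)^K / t²`. -/
theorem exploration_constant_exists (K : ℕ) (hK : 1 ≤ K) :
    (∀ D : ℝ, 0 < D →
      Summable (fun t : ℕ =>
        ((Real.log (D * ((t : ℝ) + 1) ^ 2)) ^ 2 * Real.log ((t : ℝ) + 1)) ^ K /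
          ((t : ℝ) + 1) ^ 2)) ∧
    ∃ D : ℝ, 1 ≤ D ∧
      Real.exp 1 * (Real.exp 1 / (K : ℝ)) ^ K *
        ∑' t : ℕ, ((Real.log (D * ((t : ℝ) + 1) ^ 2)) ^ 2 * Real.log ((t : ℝ) + 1)) ^ K /
          ((t : ℝ) + 1) ^ 2 ≤ D := by
  have hK0 : K ≠ 0 := by omega
  -- rewriting of the log term
  have hrew : ∀ (D : ℝ), 0 < D → ∀ t : ℕ,
      Real.log (D * ((t : ℝ) + 1) ^ 2) = Real.log D + 2 * Real.log ((t : ℝ) + 1) := by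
    intro D hD t
    have ht : ((t : ℝ) + 1) ≠ 0 := by positivity
    rw [Real.log_mul (ne_of_gt hD) (pow_ne_zero 2 ht), Real.log_pow]
    push_cast
    ring
  have hsum : ∀ D : ℝ, 0 < D →
      Summable (fun t : ℕ =>
        ((Real.log (D * ((t : ℝ) + 1) ^ 2)) ^ 2 * Real.log ((t : ℝ) + 1)) ^ K /
          ((t : ℝ) + 1) ^ 2) := by
    intro D hD
    have := aux_summable (Real.log D) 2 K hK0
    refine this.congr fun t => ?_
    rw [hrew D hD t]
  refine ⟨hsum, ?_⟩
  -- the comparison series (a = 1, b = 2)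
  set g : ℕ → ℝ := fun t =>
    ((1 + 2 * Real.log ((t : ℝ) + 1)) ^ 2 * Real.log ((t : ℝ) + 1)) ^ K /
      ((t : ℝ) + 1) ^ 2 with hgdef
  have hgsum : Summable g := aux_summable 1 2 K hK0
  have hg0 : ∀ t, 0 ≤ g t := by
    intro t
    have hL : 0 ≤ Real.log ((t : ℝ) + 1) := Real.log_nonneg (by push_cast; linarith)
    positivity
  set A : ℝ := ∑' t, g t with hAdef
  have hA0 : 0 ≤ A := tsum_nonneg hg0
  set C : ℝ := Real.exp 1 * (Real.exp 1 / (K : ℝ)) ^ K * A with hCdef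
  have hC0 : 0 ≤ C := by
    have : (0:ℝ) < Real.exp 1 := Real.exp_pos 1
    have hKpos : (0:ℝ) < (K : ℝ) := by exact_mod_cast Nat.pos_of_ne_zero hK0
    positivity
  -- find a threshold beyond which C * (1 + log x)^(2K) ≤ x
  have hlo : (fun x : ℝ => C * (1 + Real.log x) ^ (2 * K)) =o[atTop] fun x : ℝ => x := by
    have h1 : (fun x : ℝ => (1 + Real.log x) ^ (2 * K)) =o[atTop]
        fun x : ℝ => x ^ (1 : ℝ) :=
      aux_one_add_log_pow_isLittleO (2 * K) (by positivity) one_pos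
    have h2 := h1.const_mul_left C
    refine h2.trans_eventuallyEq ?_
    filter_upwards with x
    rw [Real.rpow_one]
  have hev : ∀ᶠ x : ℝ in atTop, ‖C * (1 + Real.log x) ^ (2 * K)‖ ≤ 1 * ‖x‖ :=
    hlo.def one_pos
  obtain ⟨x₀, hx₀⟩ := eventually_atTop.mp hev
  set D : ℝ := max x₀ (Real.exp 1) with hDdef
  have hDe : Real.exp 1 ≤ D := le_max_right _ _
  have hD1 : 1 ≤ D := le_trans (by nlinarith [Real.exp_one_gt_d9]) hDe
  have hDpos : 0 < D := by linarith
  have hlogD : 1 ≤ Real.log D := by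
    rw [show (1:ℝ) = Real.log (Real.exp 1) by rw [Real.log_exp]]
    exact Real.log_le_log (Real.exp_pos 1) hDe
  refine ⟨D, hD1, ?_⟩
  -- the key bound: C * (log D)^(2K) ≤ D
  have hkey : C * (1 + Real.log D) ^ (2 * K) ≤ D := by
    have := hx₀ D (le_max_left _ _)
    rw [Real.norm_eq_abs, Real.norm_eq_abs, one_mul, abs_of_pos hDpos] at this
    calc C * (1 + Real.log D) ^ (2 * K) ≤ |C * (1 + Real.log D) ^ (2 * K)| := le_abs_self _
      _ ≤ D := this
  -- termwise bound of the series
  have hterm : ∀ t : ℕ,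
      ((Real.log (D * ((t : ℝ) + 1) ^ 2)) ^ 2 * Real.log ((t : ℝ) + 1)) ^ K /
          ((t : ℝ) + 1) ^ 2 ≤ (Real.log D) ^ (2 * K) * g t := by
    intro t
    set L := Real.log ((t : ℝ) + 1) with hLdef
    have hL : 0 ≤ L := Real.log_nonneg (by push_cast; linarith)
    rw [hrew D hDpos t]
    have hb1 : Real.log D + 2 * L ≤ Real.log D * (1 + 2 * L) := by nlinarith
    have hb0 : 0 ≤ Real.log D + 2 * L := by linarith
    have hsq : (Real.log D + 2 * L) ^ 2 ≤ (Real.log D * (1 + 2 * L)) ^ 2 :=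
      pow_le_pow_left₀ hb0 hb1 2
    have hbase : (Real.log D + 2 * L) ^ 2 * L ≤ (Real.log D * (1 + 2 * L)) ^ 2 * L :=
      mul_le_mul_of_nonneg_right hsq hL
    have hpowle : ((Real.log D + 2 * L) ^ 2 * L) ^ K
        ≤ ((Real.log D * (1 + 2 * L)) ^ 2 * L) ^ K :=
      pow_le_pow_left₀ (by positivity) hbase K
    have hre : ((Real.log D * (1 + 2 * L)) ^ 2 * L) ^ K
        = (Real.log D) ^ (2 * K) * ((1 + 2 * L) ^ 2 * L) ^ K := by
      have h : (Real.log D * (1 + 2 * L)) ^ 2 * L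
          = Real.log D ^ 2 * ((1 + 2 * L) ^ 2 * L) := by ring
      rw [h, mul_pow, ← pow_mul]
    have hpos2 : (0:ℝ) < ((t : ℝ) + 1) ^ 2 := by positivity
    calc ((Real.log D + 2 * L) ^ 2 * L) ^ K / ((t : ℝ) + 1) ^ 2
        ≤ ((Real.log D) ^ (2 * K) * ((1 + 2 * L) ^ 2 * L) ^ K) / ((t : ℝ) + 1) ^ 2 := by
          gcongr
          exact hpowle.trans (le_of_eq hre)
      _ = (Real.log D) ^ (2 * K) * (((1 + 2 * L) ^ 2 * L) ^ K / ((t : ℝ) + 1) ^ 2) := by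
          ring
      _ = (Real.log D) ^ (2 * K) * g t := by rw [hgdef]
  -- sum the termwise bound
  have hsum2 : Summable (fun t : ℕ => (Real.log D) ^ (2 * K) * g t) := hgsum.mul_left _
  have htsum_le :
      (∑' t : ℕ, ((Real.log (D * ((t : ℝ) + 1) ^ 2)) ^ 2 * Real.log ((t : ℝ) + 1)) ^ K /
        ((t : ℝ) + 1) ^ 2) ≤ (Real.log D) ^ (2 * K) * A := by
    calc (∑' t : ℕ, ((Real.log (D * ((t : ℝ) + 1) ^ 2)) ^ 2 * Real.log ((t : ℝ) + 1)) ^ K /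
          ((t : ℝ) + 1) ^ 2)
        ≤ ∑' t : ℕ, (Real.log D) ^ (2 * K) * g t :=
          Summable.tsum_le_tsum hterm (hsum D hDpos) hsum2
      _ = (Real.log D) ^ (2 * K) * A := tsum_mul_left
  have hE0 : 0 ≤ Real.exp 1 * (Real.exp 1 / (K : ℝ)) ^ K := by
    have hKpos : (0:ℝ) < (K : ℝ) := by exact_mod_cast Nat.pos_of_ne_zero hK0
    positivity
  calc Real.exp 1 * (Real.exp 1 / (K : ℝ)) ^ K *
        ∑' t : ℕ, ((Real.log (D * ((t : ℝ) + 1) ^ 2)) ^ 2 * Real.log ((t : ℝ) + 1)) ^ K /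
          ((t : ℝ) + 1) ^ 2
      ≤ Real.exp 1 * (Real.exp 1 / (K : ℝ)) ^ K * ((Real.log D) ^ (2 * K) * A) :=
        mul_le_mul_of_nonneg_left htsum_le hE0
    _ = C * (Real.log D) ^ (2 * K) := by rw [hCdef]; ring
    _ ≤ C * (1 + Real.log D) ^ (2 * K) := by
        apply mul_le_mul_of_nonneg_left _ hC0
        exact pow_le_pow_left₀ (by linarith) (by linarith) _
    _ ≤ D := hkey
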